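/- Let m ≥ 3 be an integer, let C_m be the cycle graph on m vertices, let 0 < q < 1, and set r = (1−q)^{1/m}. If the edge weights v : E(C_m) → ℝ satisfy −q/(1−r) < v_e < −q/(1+r) for every edge e, then (−1)^m Z_{C_m}(q,v) < 0. Moreover, if all edge weights are equal to −q/(1−r), then Z_{C_m}(q,v) = 0. -/

import Mathlib

open Finset

/-- The number of connected components of the spanning subgraph of a finite graph
with edge set `A`. -/
noncomputable def numCompOfEdges {V : Type*} [Fintype V] (A : Finset (Sym2 V)) : ℕ :=
  Nat.card (SimpleGraph.fromEdgeSet (A : Set (Sym2 V))).ConnectedComponent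

/-- The multivariate Tutte polynomial `Z_G(q, v) = ∑_{A ⊆ E} q^{k(A)} ∏_{e ∈ A} v_e`. -/
noncomputable def tutteZ {V : Type*} [Fintype V] [DecidableEq V] (G : SimpleGraph V)
    [DecidableRel G.Adj] (q : ℝ) (v : Sym2 V → ℝ) : ℝ :=
  ∑ A ∈ G.edgeFinset.powerset, q ^ numCompOfEdges A * ∏ e ∈ A, v e

open SimpleGraph

open Finset SimpleGraph

lemma reachable_sup_edge {V : Type*} {G : SimpleGraph V} {u v a b : V}
    (h : (G ⊔ SimpleGraph.edge u v).Reachable a b) :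
    G.Reachable a b ∨ (G.Reachable a u ∧ G.Reachable v b) ∨
      (G.Reachable a v ∧ G.Reachable u b) := by
  obtain ⟨w⟩ := h
  induction w with
  | nil => exact Or.inl (Reachable.refl _)
  | @cons a c b h p ih =>
    rcases h with h | h
    · rcases ih with h' | ⟨h1, h2⟩ | ⟨h1, h2⟩
      · exact Or.inl (h.reachable.trans h')
      · exact Or.inr (Or.inl ⟨h.reachable.trans h1, h2⟩)
      · exact Or.inr (Or.inr ⟨h.reachable.trans h1, h2⟩)
    · rw [edge_adj] at h
      obtain ⟨(⟨rfl, rfl⟩ | ⟨rfl, rfl⟩), hne⟩ := h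
      · rcases ih with h' | ⟨h1, h2⟩ | ⟨h1, h2⟩
        · exact Or.inr (Or.inl ⟨Reachable.refl _, h'⟩)
        · exact Or.inl (h1.symm.trans h2)
        · exact Or.inl h2
      · rcases ih with h' | ⟨h1, h2⟩ | ⟨h1, h2⟩
        · exact Or.inr (Or.inr ⟨Reachable.refl _, h'⟩)
        · exact Or.inl h2
        · exact Or.inr (Or.inl ⟨h1.symm, h1.symm.trans h2⟩)

lemma card_comp_sup_edge {V : Type*} [Finite V] {G : SimpleGraph V} {u v : V}
    (hne : u ≠ v) (hnr : ¬ G.Reachable u v) :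
    Nat.card (G ⊔ SimpleGraph.edge u v).ConnectedComponent + 1 =
      Nat.card G.ConnectedComponent := by
  classical
  set G' := G ⊔ SimpleGraph.edge u v with hG'
  have hle : G ≤ G' := le_sup_left
  have hmono : ∀ {a b : V}, G.Reachable a b → G'.Reachable a b :=
    fun h => h.mono hle
  set f : {c : G.ConnectedComponent // c ≠ G.connectedComponentMk v} →
      G'.ConnectedComponent :=
    fun c => c.1.map (SimpleGraph.Hom.ofLE hle) with hf
  have hbij : Function.Bijective f := by
    constructor
    · rintro ⟨c, hc⟩ ⟨d, hd⟩ h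
      obtain ⟨a, rfl⟩ := c.exists_rep
      obtain ⟨b, rfl⟩ := d.exists_rep
      simp only [hf, ConnectedComponent.map_mk] at h
      replace h := ConnectedComponent.exact h
      rcases reachable_sup_edge h with h' | ⟨h1, h2⟩ | ⟨h1, h2⟩
      · exact Subtype.ext (ConnectedComponent.sound h')
      · exact absurd (ConnectedComponent.sound h2.symm) hd
      · exact absurd (ConnectedComponent.sound h1) hc
    · intro c
      obtain ⟨a, rfl⟩ := c.exists_rep
      by_cases hav : G.Reachable a v
      · refine ⟨⟨G.connectedComponentMk u, fun h => hnr (ConnectedComponent.exact h)⟩, ?_⟩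
        simp only [hf, ConnectedComponent.map_mk]
        apply ConnectedComponent.sound
        have huv : G'.Adj u v := Or.inr (by rw [edge_adj]; exact ⟨Or.inl ⟨rfl, rfl⟩, hne⟩)
        exact (huv.reachable.trans (hmono hav.symm))
      · exact ⟨⟨G.connectedComponentMk a, fun h => hav (ConnectedComponent.exact h)⟩,
          by simp only [hf, ConnectedComponent.map_mk]; rfl⟩
  have h1 : Nat.card G'.ConnectedComponent =
      Nat.card {c : G.ConnectedComponent // c ≠ G.connectedComponentMk v} :=
    (Nat.card_eq_of_bijective f hbij).symm
  rw [h1]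
  have : Nat.card {c : G.ConnectedComponent // c = G.connectedComponentMk v} = 1 := by
    rw [Nat.card_eq_one_iff_unique]
    exact ⟨⟨fun a b => Subtype.ext (a.2.trans b.2.symm)⟩, ⟨⟨_, rfl⟩⟩⟩
  have h3 := Nat.card_congr
    (Equiv.sumCompl (fun c : G.ConnectedComponent => c = G.connectedComponentMk v))
  rw [Nat.card_sum, this] at h3
  simp only [ne_eq]
  omega

lemma not_reachable_of_isolated {V : Type*} {G : SimpleGraph V} {a b : V} (h : a ≠ b)
    (hiso : ∀ c, ¬ G.Adj a c) : ¬ G.Reachable a b := by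
  intro hr
  obtain ⟨w⟩ := hr
  cases w with
  | nil => exact h rfl
  | cons had _ => exact hiso _ had

section cyc
variable {m : ℕ} [NeZero m] (hm : 3 ≤ m)
include hm
open Fin.CommRing

lemma fin_one_val : ((1 : Fin m) : ℕ) = 1 := by
  rw [Fin.val_one']
  exact Nat.mod_eq_of_lt (by omega)

lemma cyc_adj {u w : Fin m} : (SimpleGraph.cycleGraph m).Adj u w ↔ u = w + 1 ∨ w = u + 1 := by
  rw [cycleGraph_adj']
  constructor
  · rintro (h | h)
    · left; have : u - w = 1 := Fin.ext (by rw [h, fin_one_val hm])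
      rw [← this]; ring
    · right; have : w - u = 1 := Fin.ext (by rw [h, fin_one_val hm])
      rw [← this]; ring
  · rintro (rfl | rfl)
    · left; rw [add_sub_cancel_left, fin_one_val hm]
    · right; rw [add_sub_cancel_left, fin_one_val hm]

lemma cyc_edge_mem {e : Sym2 (Fin m)} (he : e ∈ (SimpleGraph.cycleGraph m).edgeSet) :
    ∃ j : Fin m, e = s(j, j + 1) := by
  induction e with
  | _ x y =>
    rw [SimpleGraph.mem_edgeSet, cyc_adj hm] at he
    rcases he with rfl | rfl
    · exact ⟨y, Sym2.eq_swap⟩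
    · exact ⟨x, rfl⟩

lemma cyc_edge_at {u : Fin m} {e : Sym2 (Fin m)}
    (he : e ∈ (SimpleGraph.cycleGraph m).edgeSet) (hu : u ∈ e) :
    e = s(u, u + 1) ∨ e = s(u - 1, u) := by
  induction e with
  | _ x y =>
    rw [SimpleGraph.mem_edgeSet, cyc_adj hm] at he
    rw [Sym2.mem_iff] at hu
    rcases hu with rfl | rfl
    · rcases he with rfl | rfl
      · right; rw [add_sub_cancel_right]; exact Sym2.eq_swap
      · left; rfl
    · rcases he with rfl | rfl
      · left; exact Sym2.eq_swap
      · right; rw [add_sub_cancel_right]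

lemma cyc_card_edges : ((SimpleGraph.cycleGraph m).edgeFinset).card = m := by
  obtain ⟨n, rfl⟩ : ∃ n, m = n + 3 := ⟨m - 3, by omega⟩
  have h := SimpleGraph.sum_degrees_eq_twice_card_edges (SimpleGraph.cycleGraph (n + 3))
  rw [Finset.sum_congr rfl (fun v _ => cycleGraph_degree_three_le)] at h
  simp only [Finset.sum_const, Finset.card_univ, Fintype.card_fin, smul_eq_mul] at h
  omega

lemma fin_succ_ne {u : Fin m} : u + 1 ≠ u := by
  intro h
  have h2 : ((u + 1 : Fin m) : ℕ) = u := congrArg Fin.val h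
  rw [Fin.val_add, fin_one_val hm] at h2
  have hlt := u.isLt
  rcases Nat.lt_or_ge (u.val + 1) m with h3 | h3
  · rw [Nat.mod_eq_of_lt h3] at h2; omega
  · have h4 : u.val + 1 = m := by omega
    rw [h4, Nat.mod_self] at h2; omega

open Fin.NatCast in
lemma exists_pendant {A : Finset (Sym2 (Fin m))}
    (hA : A ⊆ (SimpleGraph.cycleGraph m).edgeFinset)
    (hne : A ≠ (SimpleGraph.cycleGraph m).edgeFinset) (hA0 : A.Nonempty) :
    ∃ u : Fin m, s(u, u + 1) ∈ A ∧ s(u - 1, u) ∉ A := by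
  classical
  obtain ⟨f, hfE, hfA⟩ : ∃ f ∈ (SimpleGraph.cycleGraph m).edgeFinset, f ∉ A := by
    by_contra h
    push_neg at h
    exact hne (Finset.Subset.antisymm hA h)
  obtain ⟨j, rfl⟩ := cyc_edge_mem hm (SimpleGraph.mem_edgeFinset.mp hfE)
  obtain ⟨e₀, he₀⟩ := hA0
  obtain ⟨i, rfl⟩ := cyc_edge_mem hm (SimpleGraph.mem_edgeFinset.mp (hA he₀))
  have hij : i ≠ j := fun h => hfA (h ▸ he₀)
  have hN : ∃ k : ℕ, 0 < k ∧ s(j + (k : Fin m), j + (k : Fin m) + 1) ∈ A := by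
    refine ⟨(i - j).val, ?_, ?_⟩
    · have hsub : i - j ≠ 0 := sub_ne_zero.mpr hij
      exact Nat.pos_of_ne_zero (fun h => hsub (Fin.ext (by simp [h])))
    · rw [Fin.cast_val_eq_self, add_sub_cancel]
      exact he₀
  set k := Nat.find hN with hk
  obtain ⟨hkpos, hkmem⟩ := Nat.find_spec hN
  refine ⟨j + (k : Fin m), hkmem, ?_⟩
  have hcast : (k : Fin m) = ((k - 1 : ℕ) : Fin m) + 1 := by
    have : k - 1 + 1 = k := Nat.succ_pred_eq_of_pos hkpos
    rw [← this]
    push_cast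
    ring
  have hsub : j + (k : Fin m) - 1 = j + ((k - 1 : ℕ) : Fin m) := by
    rw [hcast, ← add_assoc, add_sub_cancel_right]
  rw [hsub]
  have h2 : j + (k : Fin m) = j + ((k - 1 : ℕ) : Fin m) + 1 := by
    rw [hcast, add_assoc]
  rw [h2]
  rcases Nat.eq_zero_or_pos (k - 1) with h0 | hpos
  · rw [h0]
    simpa using hfA
  · have := Nat.find_min hN (show k - 1 < k by omega)
    intro hmem
    exact this ⟨hpos, hmem⟩

lemma numComp_proper :
    ∀ A : Finset (Sym2 (Fin m)), A ⊆ (SimpleGraph.cycleGraph m).edgeFinset →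
      A ≠ (SimpleGraph.cycleGraph m).edgeFinset → numCompOfEdges A = m - A.card := by
  classical
  intro A
  induction A using Finset.strongInductionOn with
  | _ A ih =>
  intro hA hne
  rcases A.eq_empty_or_nonempty with rfl | hA0
  · rw [numCompOfEdges]
    simp only [Finset.coe_empty, SimpleGraph.fromEdgeSet_empty, Finset.card_empty, Nat.sub_zero]
    have : Nat.card ((⊥ : SimpleGraph (Fin m)).ConnectedComponent) = Nat.card (Fin m) := by
      refine Nat.card_congr (Equiv.ofBijective
        (fun v => (⊥ : SimpleGraph (Fin m)).connectedComponentMk v) ⟨?_, ?_⟩).symm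
      · intro a b h
        exact (SimpleGraph.reachable_bot).mp (SimpleGraph.ConnectedComponent.exact h)
      · intro c
        obtain ⟨a, rfl⟩ := c.exists_rep
        exact ⟨a, rfl⟩
    rw [this, Nat.card_eq_fintype_card, Fintype.card_fin]
  · obtain ⟨u, heA, hnotA⟩ := exists_pendant hm hA hne hA0
    set e : Sym2 (Fin m) := s(u, u + 1) with he
    set B := A.erase e with hB
    have hBA : B ⊂ A := Finset.erase_ssubset heA
    have hins : (A : Set (Sym2 (Fin m))) = {e} ∪ (B : Set (Sym2 (Fin m))) := by
      rw [hB, Finset.coe_erase]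
      rw [Set.union_comm, Set.diff_union_self, Set.union_eq_self_of_subset_right]
      simpa using heA
    have hGA : SimpleGraph.fromEdgeSet (A : Set (Sym2 (Fin m))) =
        SimpleGraph.fromEdgeSet (B : Set (Sym2 (Fin m))) ⊔ SimpleGraph.edge u (u + 1) := by
      rw [hins, SimpleGraph.fromEdgeSet_union, sup_comm]
      rfl
    have hnr : ¬ (SimpleGraph.fromEdgeSet (B : Set (Sym2 (Fin m)))).Reachable u (u + 1) := by
      apply not_reachable_of_isolated (Ne.symm (fin_succ_ne hm))
      intro c h
      rw [SimpleGraph.fromEdgeSet_adj] at h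
      obtain ⟨hmem, -⟩ := h
      have hmemB : s(u, c) ∈ B := hmem
      have hmemE : s(u, c) ∈ (SimpleGraph.cycleGraph m).edgeSet :=
        SimpleGraph.mem_edgeFinset.mp (hA (Finset.mem_of_mem_erase hmemB))
      rcases cyc_edge_at hm hmemE (Sym2.mem_mk_left _ _) with h1 | h1
      · exact (Finset.ne_of_mem_erase hmemB) (h1.trans he.symm ▸ rfl)
      · exact hnotA (h1 ▸ Finset.mem_of_mem_erase hmemB)
    have hcard := card_comp_sup_edge (Ne.symm (fin_succ_ne hm)) hnr
    have hA1 : numCompOfEdges A + 1 = numCompOfEdges B := by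
      rw [numCompOfEdges, numCompOfEdges, hGA]
      exact hcard
    have hBsub : B ⊆ (SimpleGraph.cycleGraph m).edgeFinset :=
      (Finset.erase_subset _ _).trans hA
    have hBne : B ≠ (SimpleGraph.cycleGraph m).edgeFinset := by
      intro h
      have : e ∈ B := h ▸ hA heA
      exact (Finset.notMem_erase _ _) this
    have hIH := ih B hBA hBsub hBne
    have hcardB : B.card = A.card - 1 := by
      rw [hB, Finset.card_erase_of_mem heA]
    have hAlt : A.card < m := by
      have h1 : A.card ≤ ((SimpleGraph.cycleGraph m).edgeFinset).card := Finset.card_le_card hA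
      have h2 : A.card ≠ ((SimpleGraph.cycleGraph m).edgeFinset).card := by
        intro h
        exact hne (Finset.eq_of_subset_of_card_le hA h.ge)
      rw [cyc_card_edges hm] at h1 h2
      omega
    have hApos : 1 ≤ A.card := Finset.card_pos.mpr hA0
    omega

lemma numComp_full : numCompOfEdges ((SimpleGraph.cycleGraph m).edgeFinset) = 1 := by
  rw [numCompOfEdges, SimpleGraph.coe_edgeFinset, SimpleGraph.fromEdgeSet_edgeSet]
  rw [Nat.card_eq_one_iff_unique]
  constructor
  · constructor
    intro c d
    obtain ⟨a, rfl⟩ := c.exists_rep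
    obtain ⟨b, rfl⟩ := d.exists_rep
    exact SimpleGraph.ConnectedComponent.sound (cycleGraph_preconnected a b)
  · exact ⟨(SimpleGraph.cycleGraph m).connectedComponentMk ⟨0, by omega⟩⟩

lemma tutteZ_cycle_eq (q : ℝ) (v : Sym2 (Fin m) → ℝ) :
    tutteZ (SimpleGraph.cycleGraph m) q v =
      (∏ e ∈ (SimpleGraph.cycleGraph m).edgeFinset, (v e + q)) +
        (q - 1) * ∏ e ∈ (SimpleGraph.cycleGraph m).edgeFinset, v e := by
  classical
  set E := (SimpleGraph.cycleGraph m).edgeFinset with hE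
  have hmemE : E ∈ E.powerset := Finset.mem_powerset_self E
  have hprod : ∏ e ∈ E, (v e + q) =
      ∑ A ∈ E.powerset, q ^ (m - A.card) * ∏ e ∈ A, v e := by
    rw [Finset.prod_add]
    refine Finset.sum_congr rfl fun A hA => ?_
    rw [Finset.mem_powerset] at hA
    rw [Finset.prod_const, Finset.card_sdiff_of_subset hA, cyc_card_edges hm, mul_comm]
  have hsplit : ∀ (f : Finset (Sym2 (Fin m)) → ℝ),
      ∑ A ∈ E.powerset, f A = (∑ A ∈ E.powerset.erase E, f A) + f E := by
    intro f
    rw [Finset.sum_erase_add _ _ hmemE]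
  rw [tutteZ, hsplit, hprod, hsplit]
  have hagree : ∀ A ∈ E.powerset.erase E,
      q ^ numCompOfEdges A * ∏ e ∈ A, v e = q ^ (m - A.card) * ∏ e ∈ A, v e := by
    intro A hA
    obtain ⟨hne, hsub⟩ := Finset.mem_erase.mp hA
    rw [numComp_proper hm A (Finset.mem_powerset.mp hsub) hne]
  rw [Finset.sum_congr rfl hagree]
  rw [numComp_full hm, cyc_card_edges hm, Nat.sub_self]
  ring

end cyc

/-- Let `m ≥ 3`, let `C_m` be the cycle on `m` vertices, let `0 < q < 1` and set
`r = (1-q)^{1/m}`.  If `-q/(1-r) < v_e < -q/(1+r)` for every edge then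
`(-1)^m Z_{C_m}(q,v) < 0`; and if `v_e = -q/(1-r)` for every edge then
`Z_{C_m}(q,v) = 0`. -/
theorem tutteZ_cycle_sign {m : ℕ} (hm : 3 ≤ m) (q : ℝ) (hq0 : 0 < q) (hq1 : q < 1)
    (r : ℝ) (hr : r = (1 - q) ^ ((m : ℝ)⁻¹)) :
    (∀ v : Sym2 (Fin m) → ℝ,
      (∀ e ∈ (SimpleGraph.cycleGraph m).edgeFinset,
        -q / (1 - r) < v e ∧ v e < -q / (1 + r)) →
      (-1 : ℝ) ^ m * tutteZ (SimpleGraph.cycleGraph m) q v < 0) ∧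
    (∀ v : Sym2 (Fin m) → ℝ,
      (∀ e ∈ (SimpleGraph.cycleGraph m).edgeFinset, v e = -q / (1 - r)) →
      tutteZ (SimpleGraph.cycleGraph m) q v = 0) := by
  haveI : NeZero m := ⟨by omega⟩
  set E := (SimpleGraph.cycleGraph m).edgeFinset with hE
  have hcardE : E.card = m := cyc_card_edges hm
  have hq' : (0 : ℝ) < 1 - q := by linarith
  have hminv : (0 : ℝ) < (m : ℝ)⁻¹ := by
    have : (0 : ℝ) < m := by exact_mod_cast (by omega : 0 < m)
    positivity
  have hr0 : 0 < r := by rw [hr]; exact Real.rpow_pos_of_pos hq' _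
  have hr1 : r < 1 := by rw [hr]; exact Real.rpow_lt_one (le_of_lt hq') (by linarith) hminv
  have hrm : r ^ m = 1 - q := by
    rw [hr, ← Real.rpow_natCast ((1 - q) ^ ((m : ℝ)⁻¹)) m, ← Real.rpow_mul (le_of_lt hq'),
      inv_mul_cancel₀ (by exact_mod_cast (by omega : m ≠ 0)), Real.rpow_one]
  have h1r : (0 : ℝ) < 1 - r := by linarith
  have h1r' : (0 : ℝ) < 1 + r := by linarith
  have hEne : E.Nonempty := by
    rw [← Finset.card_pos, hcardE]; omega
  have hprodneg : ∀ f : Sym2 (Fin m) → ℝ,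
      ∏ e ∈ E, (-(f e)) = (-1 : ℝ) ^ m * ∏ e ∈ E, f e := by
    intro f
    calc ∏ e ∈ E, (-(f e)) = ∏ e ∈ E, ((-1) * f e) := by simp
    _ = (∏ _e ∈ E, (-1 : ℝ)) * ∏ e ∈ E, f e := Finset.prod_mul_distrib
    _ = (-1 : ℝ) ^ m * ∏ e ∈ E, f e := by rw [Finset.prod_const, hcardE]
  constructor
  · intro v hv
    set a : Sym2 (Fin m) → ℝ := fun e => -(q + v e) with ha
    set b : Sym2 (Fin m) → ℝ := fun e => r * (-(v e)) with hb
    have hbpos : ∀ e ∈ E, 0 < b e := by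
      intro e he
      obtain ⟨-, h2⟩ := hv e he
      have : v e < 0 := by
        have : -q / (1 + r) < 0 := div_neg_of_neg_of_pos (by linarith) h1r'
        linarith
      simp only [hb]
      nlinarith
    have habs : ∀ e ∈ E, |a e| < b e := by
      intro e he
      obtain ⟨h1, h2⟩ := hv e he
      rw [div_lt_iff₀ h1r] at h1
      rw [lt_div_iff₀ h1r'] at h2
      rw [abs_lt]
      constructor
      · simp only [ha, hb]; nlinarith
      · simp only [ha, hb]; nlinarith
    have hkey : ∏ e ∈ E, a e < ∏ e ∈ E, b e := by
      by_cases hex : ∃ e ∈ E, a e = 0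
      · obtain ⟨e, he, h0⟩ := hex
        rw [Finset.prod_eq_zero he h0]
        exact Finset.prod_pos hbpos
      · push_neg at hex
        calc ∏ e ∈ E, a e ≤ |∏ e ∈ E, a e| := le_abs_self _
        _ = ∏ e ∈ E, |a e| := Finset.abs_prod E a
        _ < ∏ e ∈ E, b e := by
            refine Finset.prod_lt_prod_of_nonempty ?_ habs hEne
            intro e he
            exact abs_pos.mpr (hex e he)
    have hZ : (-1 : ℝ) ^ m * tutteZ (SimpleGraph.cycleGraph m) q v =
        (∏ e ∈ E, a e) - ∏ e ∈ E, b e := by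
      rw [tutteZ_cycle_eq hm]
      have h1 : ∏ e ∈ E, a e = (-1 : ℝ) ^ m * ∏ e ∈ E, (v e + q) := by
        rw [ha]
        calc ∏ e ∈ E, (-(q + v e)) = (-1 : ℝ) ^ m * ∏ e ∈ E, (q + v e) := hprodneg _
        _ = (-1 : ℝ) ^ m * ∏ e ∈ E, (v e + q) := by
            congr 1; exact Finset.prod_congr rfl fun e _ => by ring
      have h2 : ∏ e ∈ E, b e = (1 - q) * ((-1 : ℝ) ^ m * ∏ e ∈ E, v e) := by
        rw [hb]
        calc ∏ e ∈ E, (r * (-(v e)))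
            = (∏ _e ∈ E, r) * ∏ e ∈ E, (-(v e)) := Finset.prod_mul_distrib
        _ = r ^ m * ((-1 : ℝ) ^ m * ∏ e ∈ E, v e) := by
            rw [Finset.prod_const, hcardE, hprodneg]
        _ = (1 - q) * ((-1 : ℝ) ^ m * ∏ e ∈ E, v e) := by rw [hrm]
      rw [h1, h2]
      ring
    rw [hZ]
    linarith
  · intro v hv
    rw [tutteZ_cycle_eq hm]
    set c : ℝ := -q / (1 - r) with hc
    have hcq : c + q = c * r := by
      rw [hc]
      field_simp
      ring
    have h1 : ∏ e ∈ E, (v e + q) = (c * r) ^ m := by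
      rw [← hcq]
      rw [Finset.prod_congr rfl fun e he => by rw [hv e he], Finset.prod_const, hcardE]
    have h2 : ∏ e ∈ E, v e = c ^ m := by
      rw [Finset.prod_congr rfl fun e he => by rw [hv e he], Finset.prod_const, hcardE]
    rw [h1, h2, mul_pow, hrm]
    ring
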